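/- Let {μ_n} and μ be Borel probability measures with compact supports on ℝ^s, and suppose μ_n converges weakly to μ. If the integral periodic zero set Z(μ) = {ξ ∈ [0,1)^s : μ̂(ξ+k) = 0 for all k ∈ ℤ^s} is empty, then there exists a subsequence {μ_{n_k}} which is an equi-positive family: there is ε₀ > 0 such that for every x ∈ [0,1)^s and every k there exists m ∈ ℤ^s with |μ̂_{n_k}(x+m)| > ε₀. -/

import Mathlib

open MeasureTheory Filter Topology Set

noncomputable section

/-- Fourier transform `μ̂(ξ) = ∫ e^{2πi⟨x,ξ⟩} dμ(x)` of a Borel measure on `ℝ^s`. -/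
def ftE {s : ℕ} (μ : Measure (EuclideanSpace ℝ (Fin s)))
    (ξ : EuclideanSpace ℝ (Fin s)) : ℂ :=
  ∫ x, Complex.exp (2 * Real.pi * Complex.I * ((inner ℝ x ξ : ℝ) : ℂ)) ∂μ

/-- The lattice point `k ∈ ℤ^s` viewed as a vector of `ℝ^s`. -/
def intVec {s : ℕ} (k : Fin s → ℤ) : EuclideanSpace ℝ (Fin s) := WithLp.toLp 2 (fun i => (k i : ℝ))

/-- The integral periodic zero set
`Z(μ) = {ξ ∈ [0,1)^s : μ̂(ξ+k) = 0 for all k ∈ ℤ^s}`. -/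
def ZE {s : ℕ} (μ : Measure (EuclideanSpace ℝ (Fin s))) :
    Set (EuclideanSpace ℝ (Fin s)) :=
  {ξ | (∀ i, ξ i ∈ Set.Ico (0 : ℝ) 1) ∧ ∀ k : Fin s → ℤ, ftE μ (ξ + intVec k) = 0}

/-- The cube `[0,1]^s`. -/
def cubeIcc (s : ℕ) : Set (EuclideanSpace ℝ (Fin s)) :=
  {x | ∀ i, x i ∈ Set.Icc (0 : ℝ) 1}

/-- The cube `[0,1)^s`. -/
def cubeIco (s : ℕ) : Set (EuclideanSpace ℝ (Fin s)) :=
  {x | ∀ i, x i ∈ Set.Ico (0 : ℝ) 1}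

/-- Weak convergence of measures on `ℝ^s` (tested against continuous functions with
compact support). -/
def WeakConvE {s : ℕ} (μn : ℕ → Measure (EuclideanSpace ℝ (Fin s)))
    (μ : Measure (EuclideanSpace ℝ (Fin s))) : Prop :=
  ∀ f : C(EuclideanSpace ℝ (Fin s), ℝ), HasCompactSupport f →
    Tendsto (fun n => ∫ x, f x ∂(μn n)) atTop (nhds (∫ x, f x ∂μ))

end


noncomputable section
namespace Stmt6Aux
variable {s : ℕ}


lemma norm_exp_sub_exp (a b : ℝ) :
    ‖Complex.exp (↑a * Complex.I) - Complex.exp (↑b * Complex.I)‖ ≤ |a - b| := by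
  have h1 : Complex.exp (↑a * Complex.I) - Complex.exp (↑b * Complex.I)
      = Complex.exp (↑b * Complex.I) * (Complex.exp (↑(a - b) * Complex.I) - 1) := by
    rw [mul_sub, mul_one, ← Complex.exp_add]
    push_cast; ring_nf
  rw [h1, norm_mul, Complex.norm_exp_ofReal_mul_I,
    one_mul]
  set t := a - b with ht
  clear_value t
  have h3 : Complex.exp (↑t * Complex.I) - 1
      = ↑(Real.cos t - 1) + ↑(Real.sin t) * Complex.I := by
    rw [Complex.exp_mul_I]
    push_cast [Complex.ofReal_cos, Complex.ofReal_sin]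
    ring
  rw [h3, Complex.norm_add_mul_I, ← Real.sqrt_sq_eq_abs]
  apply Real.sqrt_le_sqrt
  have e1 : (Real.cos t - 1)^2 + Real.sin t^2 = 2 - 2*Real.cos t := by
    have := Real.sin_sq_add_cos_sq t; ring_nf; linarith
  rw [e1]
  have := Real.one_sub_sq_div_two_le_cos (x := t)
  linarith


/-- The complex exponential `e^{2πi⟨x,ξ⟩}`. -/
def eFun (ξ x : EuclideanSpace ℝ (Fin s)) : ℂ :=
  Complex.exp (2 * Real.pi * Complex.I * ((inner ℝ x ξ : ℝ) : ℂ))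

lemma ftE_eq (μ : Measure (EuclideanSpace ℝ (Fin s))) (ξ : EuclideanSpace ℝ (Fin s)) :
    ftE μ ξ = ∫ x, eFun ξ x ∂μ := rfl

lemma eFun_eq (ξ x : EuclideanSpace ℝ (Fin s)) :
    eFun ξ x = Complex.exp (↑(2 * Real.pi * (inner ℝ x ξ : ℝ)) * Complex.I) := by
  unfold eFun; congr 1; push_cast; ring

lemma norm_eFun (ξ x : EuclideanSpace ℝ (Fin s)) : ‖eFun ξ x‖ = 1 := by
  rw [eFun_eq, Complex.norm_exp_ofReal_mul_I]

lemma norm_eFun_sub (ξ η x : EuclideanSpace ℝ (Fin s)) :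
    ‖eFun ξ x - eFun η x‖ ≤ 2 * Real.pi * ‖x‖ * ‖ξ - η‖ := by
  rw [eFun_eq, eFun_eq]
  refine (norm_exp_sub_exp _ _).trans ?_
  have h : 2 * Real.pi * (inner ℝ x ξ : ℝ) - 2 * Real.pi * (inner ℝ x η : ℝ)
      = 2 * Real.pi * (inner ℝ x (ξ - η) : ℝ) := by
    rw [inner_sub_right]; ring
  rw [h, abs_mul, abs_of_nonneg (by positivity : (0:ℝ) ≤ 2 * Real.pi)]
  calc 2 * Real.pi * |(inner ℝ x (ξ - η) : ℝ)| ≤ 2 * Real.pi * (‖x‖ * ‖ξ - η‖) :=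
        mul_le_mul_of_nonneg_left (abs_real_inner_le_norm x (ξ - η)) (by positivity)
    _ = 2 * Real.pi * ‖x‖ * ‖ξ - η‖ := by ring

lemma continuous_eFun_x (ξ : EuclideanSpace ℝ (Fin s)) : Continuous (fun x => eFun ξ x) := by
  unfold eFun
  exact Complex.continuous_exp.comp
    (continuous_const.mul (Complex.continuous_ofReal.comp
      (Continuous.inner continuous_id continuous_const)))

lemma continuous_eFun_xi (x : EuclideanSpace ℝ (Fin s)) : Continuous (fun ξ => eFun ξ x) := by
  unfold eFun
  exact Complex.continuous_exp.comp
    (continuous_const.mul (Complex.continuous_ofReal.comp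
      (Continuous.inner continuous_const continuous_id)))

lemma integrable_bdd {α : Type*} [MeasurableSpace α] [TopologicalSpace α] [OpensMeasurableSpace α]
    [SecondCountableTopology α]
    {β : Type*} [NormedAddCommGroup β] {ν : Measure α} [IsFiniteMeasure ν]
    {f : α → β} (hf : Continuous f) (C : ℝ) (hC : ∀ x, ‖f x‖ ≤ C) : Integrable f ν :=
  Integrable.mono' (integrable_const C) hf.aestronglyMeasurable (ae_of_all _ hC)

lemma integrable_eFun (ν : Measure (EuclideanSpace ℝ (Fin s))) [IsFiniteMeasure ν]
    (ξ : EuclideanSpace ℝ (Fin s)) : Integrable (fun x => eFun ξ x) ν :=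
  integrable_bdd (continuous_eFun_x ξ) 1 (fun x => le_of_eq (norm_eFun ξ x))

lemma continuous_ftE (ν : Measure (EuclideanSpace ℝ (Fin s))) [IsFiniteMeasure ν] :
    Continuous (ftE ν) := by
  have h : ftE ν = fun ξ => ∫ x, eFun ξ x ∂ν := rfl
  rw [h]
  apply continuous_of_dominated (bound := fun _ => (1:ℝ))
  · exact fun ξ => (continuous_eFun_x ξ).aestronglyMeasurable
  · exact fun ξ => ae_of_all _ fun x => le_of_eq (norm_eFun ξ x)
  · exact integrable_const 1
  · exact ae_of_all _ fun x => continuous_eFun_xi x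


/-- cutoff: 1 on ball R, 0 outside ball (R+1) -/
def gcut (R : ℝ) (x : EuclideanSpace ℝ (Fin s)) : ℝ := 1 - min 1 (max 0 (‖x‖ - R))

lemma gcut_continuous (R : ℝ) : Continuous (gcut (s := s) R) :=
  continuous_const.sub (continuous_const.min (continuous_const.max (continuous_norm.sub continuous_const)))

lemma gcut_nonneg (R : ℝ) (x : EuclideanSpace ℝ (Fin s)) : 0 ≤ gcut R x := by
  unfold gcut; have := min_le_left (1:ℝ) (max 0 (‖x‖ - R)); linarith

lemma gcut_le_one (R : ℝ) (x : EuclideanSpace ℝ (Fin s)) : gcut R x ≤ 1 := by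
  unfold gcut
  have h1 : (0:ℝ) ≤ max 0 (‖x‖ - R) := le_max_left _ _
  have h2 : (0:ℝ) ≤ min 1 (max 0 (‖x‖ - R)) := le_min (by norm_num) h1
  linarith

lemma gcut_eq_one (R : ℝ) (x : EuclideanSpace ℝ (Fin s)) (hx : ‖x‖ ≤ R) : gcut R x = 1 := by
  unfold gcut
  have h1 : max 0 (‖x‖ - R) = 0 := max_eq_left (by linarith)
  rw [h1, min_eq_right (by norm_num : (0:ℝ) ≤ 1), sub_zero]

lemma gcut_eq_zero (R : ℝ) (x : EuclideanSpace ℝ (Fin s)) (hx : R + 1 ≤ ‖x‖) : gcut R x = 0 := by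
  unfold gcut
  have h1 : (1:ℝ) ≤ max 0 (‖x‖ - R) := le_max_of_le_right (by linarith)
  rw [min_eq_left h1, sub_self]

lemma gcut_hcs (R : ℝ) : HasCompactSupport (gcut (s := s) R) := by
  apply HasCompactSupport.intro (isCompact_closedBall (0 : EuclideanSpace ℝ (Fin s)) (R + 1))
  intro x hx
  apply gcut_eq_zero
  have : ¬ dist x 0 ≤ R + 1 := fun h => hx (Metric.mem_closedBall.mpr h)
  rw [dist_zero_right] at this
  linarith

lemma isCompact_cubeIcc : IsCompact (cubeIcc s) := by
  apply Metric.isCompact_of_isClosed_isBounded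
  · have : cubeIcc s = ⋂ i, (fun x : EuclideanSpace ℝ (Fin s) => x i) ⁻¹' Set.Icc 0 1 := by
      ext x; simp [cubeIcc, Set.mem_iInter]
    rw [this]
    exact isClosed_iInter fun i => isClosed_Icc.preimage (EuclideanSpace.proj (𝕜 := ℝ) i).continuous
  · rw [isBounded_iff_forall_norm_le]
    refine ⟨Real.sqrt s, fun x hx => ?_⟩
    rw [EuclideanSpace.norm_eq]
    apply Real.sqrt_le_sqrt
    calc ∑ i, ‖x i‖ ^ 2 ≤ ∑ _i : Fin s, (1:ℝ) := by
          apply Finset.sum_le_sum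
          intro i _
          have h1 := (hx i).1
          have h2 := (hx i).2
          have : ‖x i‖ ≤ 1 := by rw [Real.norm_eq_abs, abs_le]; constructor <;> linarith
          nlinarith [norm_nonneg (x i)]
      _ = (s : ℝ) := by simp

lemma exists_ne_zero (μ : Measure (EuclideanSpace ℝ (Fin s))) (hZ : ZE μ = ∅)
    (ξ : EuclideanSpace ℝ (Fin s)) : ∃ m : Fin s → ℤ, ftE μ (ξ + intVec m) ≠ 0 := by
  classical
  set j : Fin s → ℤ := fun i => ⌊ξ i⌋ with hj
  set ξ' : EuclideanSpace ℝ (Fin s) := WithLp.toLp 2 (fun i => Int.fract (ξ i)) with hξ'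
  have hmem : ∀ i, ξ' i ∈ Set.Ico (0:ℝ) 1 := fun i => ⟨Int.fract_nonneg _, Int.fract_lt_one _⟩
  rw [Set.eq_empty_iff_forall_notMem] at hZ
  have h2 := hZ ξ'
  simp only [ZE, Set.mem_setOf_eq] at h2
  push_neg at h2
  obtain ⟨k, hk⟩ := h2 hmem
  refine ⟨fun i => k i - j i, ?_⟩
  have heq : ξ + intVec (fun i => k i - j i) = ξ' + intVec k := by
    ext i
    show ξ i + ((k i - j i : ℤ) : ℝ) = Int.fract (ξ i) + (k i : ℝ)
    rw [Int.fract]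
    push_cast
    ring
  rw [heq]
  exact hk

lemma exists_eps_cover (μ : Measure (EuclideanSpace ℝ (Fin s))) [IsFiniteMeasure μ]
    (hZ : ZE μ = ∅) :
    ∃ ε₁ : ℝ, 0 < ε₁ ∧ ∃ T : Finset (Fin s → ℤ),
      ∀ ξ ∈ cubeIcc s, ∃ m ∈ T, ε₁ < ‖ftE μ (ξ + intVec m)‖ := by
  classical
  -- open cover indexed by (m, positive rational q)
  set U : (Fin s → ℤ) × {q : ℚ // 0 < q} → Set (EuclideanSpace ℝ (Fin s)) :=
    fun p => {ξ | ((p.2 : ℚ) : ℝ) < ‖ftE μ (ξ + intVec p.1)‖} with hU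
  have hUopen : ∀ p, IsOpen (U p) := by
    intro p
    have hc : Continuous fun ξ : EuclideanSpace ℝ (Fin s) => ‖ftE μ (ξ + intVec p.1)‖ :=
      ((continuous_ftE μ).comp (continuous_id.add continuous_const)).norm
    exact isOpen_lt continuous_const hc
  have hcover : cubeIcc s ⊆ ⋃ p, U p := by
    intro ξ _
    obtain ⟨m, hm⟩ := exists_ne_zero μ hZ ξ
    have hpos : 0 < ‖ftE μ (ξ + intVec m)‖ := norm_pos_iff.mpr hm
    obtain ⟨q, hq1, hq2⟩ := exists_rat_btwn hpos
    refine Set.mem_iUnion.mpr ⟨⟨m, ⟨q, by exact_mod_cast hq1⟩⟩, hq2⟩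
  obtain ⟨t, ht⟩ := isCompact_cubeIcc.elim_finite_subcover U hUopen hcover
  by_cases hte : t.Nonempty
  · refine ⟨((t.inf' hte fun p => ((p.2 : ℚ) : ℝ))), ?_, t.image Prod.fst, ?_⟩
    · rw [Finset.lt_inf'_iff]
      intro p _
      exact_mod_cast p.2.2
    · intro ξ hξ
      obtain ⟨p, hpt, hpU⟩ := Set.mem_iUnion₂.mp (ht hξ)
      refine ⟨p.1, Finset.mem_image_of_mem _ hpt, ?_⟩
      calc t.inf' hte (fun p => ((p.2 : ℚ) : ℝ)) ≤ ((p.2 : ℚ) : ℝ) := Finset.inf'_le _ hpt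
        _ < _ := hpU
  · -- t empty: then cubeIcc ⊆ ∅, but 0 ∈ cubeIcc
    exfalso
    have h0 : (0 : EuclideanSpace ℝ (Fin s)) ∈ cubeIcc s := by
      intro i
      show (0:ℝ) ∈ Set.Icc (0:ℝ) 1
      norm_num
    obtain ⟨p, hpt, _⟩ := Set.mem_iUnion₂.mp (ht h0)
    exact hte ⟨p, hpt⟩

/-- The cut-off Fourier-type integral. -/
def phi (R : ℝ) (ν : Measure (EuclideanSpace ℝ (Fin s))) (m : Fin s → ℤ)
    (ξ : EuclideanSpace ℝ (Fin s)) : ℂ :=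
  ∫ x, ((gcut R x : ℝ) : ℂ) * eFun (ξ + intVec m) x ∂ν

lemma norm_gcut_le_one (R : ℝ) (x : EuclideanSpace ℝ (Fin s)) : ‖gcut R x‖ ≤ 1 := by
  rw [Real.norm_eq_abs, abs_le]
  exact ⟨by linarith [gcut_nonneg R x], gcut_le_one R x⟩

lemma integrable_gcut (R : ℝ) (ν : Measure (EuclideanSpace ℝ (Fin s))) [IsFiniteMeasure ν] :
    Integrable (gcut R) ν :=
  integrable_bdd (gcut_continuous R) 1 (norm_gcut_le_one R)

lemma integrable_gcut_mul (R : ℝ) (ν : Measure (EuclideanSpace ℝ (Fin s))) [IsFiniteMeasure ν]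
    (ξ' : EuclideanSpace ℝ (Fin s)) :
    Integrable (fun x => ((gcut R x : ℝ) : ℂ) * eFun ξ' x) ν := by
  refine integrable_bdd ?_ 1 ?_
  · exact (Complex.continuous_ofReal.comp (gcut_continuous R)).mul (continuous_eFun_x ξ')
  intro x
  rw [norm_mul, norm_eFun, mul_one, Complex.norm_real]
  exact norm_gcut_le_one R x

lemma phi_dist (R : ℝ) (ν : Measure (EuclideanSpace ℝ (Fin s))) [IsProbabilityMeasure ν]
    (m : Fin s → ℤ) (ξ : EuclideanSpace ℝ (Fin s)) :
    ‖ftE ν (ξ + intVec m) - phi R ν m ξ‖ ≤ ∫ x, (1 - gcut R x) ∂ν := by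
  set ξ' := ξ + intVec m with hξ'
  have h1 : ftE ν ξ' - phi R ν m ξ = ∫ x, ((1 - gcut R x : ℝ) : ℂ) * eFun ξ' x ∂ν := by
    rw [ftE_eq, phi, ← hξ', ← integral_sub (integrable_eFun ν ξ') (integrable_gcut_mul R ν ξ')]
    apply integral_congr_ae
    apply ae_of_all
    intro x
    push_cast
    ring
  rw [h1]
  have hb : Integrable (fun x => 1 - gcut R x) ν := by
    exact (integrable_const 1).sub (integrable_gcut R ν)
  apply norm_integral_le_of_norm_le hb
  apply ae_of_all
  intro x
  rw [norm_mul, norm_eFun, mul_one, Complex.norm_real, Real.norm_eq_abs,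
    abs_of_nonneg (by linarith [gcut_le_one R x])]

lemma phi_lip (R : ℝ) (hR : 0 ≤ R) (ν : Measure (EuclideanSpace ℝ (Fin s)))
    [IsProbabilityMeasure ν] (m : Fin s → ℤ) (ξ η : EuclideanSpace ℝ (Fin s)) :
    ‖phi R ν m ξ - phi R ν m η‖ ≤ 2 * Real.pi * (R + 1) * ‖ξ - η‖ := by
  have h1 : phi R ν m ξ - phi R ν m η
      = ∫ x, ((gcut R x : ℝ) : ℂ) * (eFun (ξ + intVec m) x - eFun (η + intVec m) x) ∂ν := by
    rw [phi, phi, ← integral_sub (integrable_gcut_mul R ν _) (integrable_gcut_mul R ν _)]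
    apply integral_congr_ae
    apply ae_of_all
    intro x
    ring
  rw [h1]
  have hpt : ∀ x : EuclideanSpace ℝ (Fin s),
      ‖((gcut R x : ℝ) : ℂ) * (eFun (ξ + intVec m) x - eFun (η + intVec m) x)‖
        ≤ 2 * Real.pi * (R + 1) * ‖ξ - η‖ := by
    intro x
    by_cases hx : ‖x‖ ≤ R + 1
    · have hns := norm_eFun_sub (ξ + intVec m) (η + intVec m) x
      rw [add_sub_add_right_eq_sub] at hns
      rw [norm_mul, Complex.norm_real]
      calc ‖gcut R x‖ * ‖eFun (ξ + intVec m) x - eFun (η + intVec m) x‖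
          ≤ 1 * (2 * Real.pi * ‖x‖ * ‖ξ - η‖) :=
            mul_le_mul (norm_gcut_le_one R x) hns (norm_nonneg _) one_pos.le
        _ = 2 * Real.pi * ‖x‖ * ‖ξ - η‖ := one_mul _
        _ ≤ 2 * Real.pi * (R + 1) * ‖ξ - η‖ := by
            apply mul_le_mul_of_nonneg_right _ (norm_nonneg _)
            exact mul_le_mul_of_nonneg_left hx (by positivity)
    · have hg0 : gcut R x = 0 := gcut_eq_zero R x (by linarith [le_of_not_ge hx])
      rw [hg0]
      simp only [Complex.ofReal_zero, zero_mul, norm_zero]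
      positivity
  refine (norm_integral_le_of_norm_le (integrable_const _) (ae_of_all _ hpt)).trans ?_
  rw [integral_const]
  simp [measure_univ]

lemma ftE_lip (μ : Measure (EuclideanSpace ℝ (Fin s))) [IsProbabilityMeasure μ]
    (R : ℝ) (hae : ∀ᵐ x ∂μ, ‖x‖ ≤ R) (m : Fin s → ℤ) (ξ η : EuclideanSpace ℝ (Fin s)) :
    ‖ftE μ (ξ + intVec m) - ftE μ (η + intVec m)‖ ≤ 2 * Real.pi * (R + 1) * ‖ξ - η‖ := by
  rw [ftE_eq, ftE_eq, ← integral_sub (integrable_eFun μ _) (integrable_eFun μ _)]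
  refine (norm_integral_le_of_norm_le (integrable_const (2 * Real.pi * (R + 1) * ‖ξ - η‖)) ?_).trans ?_
  · filter_upwards [hae] with x hx
    have hns := norm_eFun_sub (ξ + intVec m) (η + intVec m) x
    rw [add_sub_add_right_eq_sub] at hns
    refine hns.trans ?_
    apply mul_le_mul_of_nonneg_right _ (norm_nonneg _)
    apply mul_le_mul_of_nonneg_left (by linarith) (by positivity)
  · rw [integral_const]
    simp [measure_univ]
lemma integral_ofReal' {α : Type*} [MeasurableSpace α] {ν : Measure α} (f : α → ℝ)
    (hf : Integrable f ν) : ∫ x, ((f x : ℝ) : ℂ) ∂ν = ((∫ x, f x ∂ν : ℝ) : ℂ) := by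
  have := ContinuousLinearMap.integral_comp_comm Complex.ofRealCLM hf
  simpa using this

lemma tail_tendsto (μn : ℕ → Measure (EuclideanSpace ℝ (Fin s)))
    (μ : Measure (EuclideanSpace ℝ (Fin s))) [IsProbabilityMeasure μ]
    (hn : ∀ n, IsProbabilityMeasure (μn n)) (hw : WeakConvE μn μ)
    (R : ℝ) (hμae : ∀ᵐ x ∂μ, ‖x‖ ≤ R) :
    Tendsto (fun n => ∫ x, (1 - gcut R x) ∂(μn n)) atTop (nhds 0) := by
  have hg : ∀ (ν : Measure (EuclideanSpace ℝ (Fin s))), IsProbabilityMeasure ν →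
      ∫ x, (1 - gcut R x) ∂ν = 1 - ∫ x, gcut R x ∂ν := by
    intro ν hν
    rw [integral_sub (integrable_const 1) (integrable_gcut R ν), integral_const]
    simp [measure_univ]
  have hwg := hw ⟨gcut R, gcut_continuous R⟩ (gcut_hcs R)
  have hμg : ∫ x, gcut R x ∂μ = 1 := by
    have h1 : ∫ x, gcut R x ∂μ = ∫ _x, (1:ℝ) ∂μ := by
      apply integral_congr_ae
      filter_upwards [hμae] with x hx
      exact gcut_eq_one R x hx
    rw [h1, integral_const]
    simp [measure_univ]
  have h2 : Tendsto (fun n => 1 - ∫ x, gcut R x ∂(μn n)) atTop (nhds 0) := by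
    have h3 : Tendsto (fun n => ∫ x, gcut R x ∂(μn n)) atTop (nhds 1) := by
      simpa [hμg] using hwg
    have := h3.const_sub 1
    simpa using this
  apply h2.congr
  intro n
  haveI := hn n
  exact (hg (μn n) (hn n)).symm

lemma phi_tendsto (μn : ℕ → Measure (EuclideanSpace ℝ (Fin s)))
    (μ : Measure (EuclideanSpace ℝ (Fin s))) [IsProbabilityMeasure μ]
    (hn : ∀ n, IsProbabilityMeasure (μn n)) (hw : WeakConvE μn μ)
    (R : ℝ) (hμae : ∀ᵐ x ∂μ, ‖x‖ ≤ R) (m : Fin s → ℤ) (p : EuclideanSpace ℝ (Fin s)) :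
    Tendsto (fun n => phi R (μn n) m p) atTop (nhds (ftE μ (p + intVec m))) := by
  set ξ' := p + intVec m with hξ'
  have hcont1 : Continuous fun x : EuclideanSpace ℝ (Fin s) =>
      gcut R x * Real.cos (2 * Real.pi * (inner ℝ x ξ' : ℝ)) :=
    (gcut_continuous R).mul (Real.continuous_cos.comp
      (continuous_const.mul (Continuous.inner continuous_id continuous_const)))
  have hcont2 : Continuous fun x : EuclideanSpace ℝ (Fin s) =>
      gcut R x * Real.sin (2 * Real.pi * (inner ℝ x ξ' : ℝ)) :=
    (gcut_continuous R).mul (Real.continuous_sin.comp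
      (continuous_const.mul (Continuous.inner continuous_id continuous_const)))
  set f₁ : C(EuclideanSpace ℝ (Fin s), ℝ) := ⟨_, hcont1⟩ with hf₁
  set f₂ : C(EuclideanSpace ℝ (Fin s), ℝ) := ⟨_, hcont2⟩ with hf₂
  have hcs1 : HasCompactSupport (⇑f₁) := (gcut_hcs R).mul_right
  have hcs2 : HasCompactSupport (⇑f₂) := (gcut_hcs R).mul_right
  have hbd1 : ∀ x, ‖f₁ x‖ ≤ 1 := by
    intro x
    rw [show f₁ x = gcut R x * Real.cos (2 * Real.pi * (inner ℝ x ξ' : ℝ)) from rfl, norm_mul]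
    calc ‖gcut R x‖ * ‖Real.cos (2 * Real.pi * (inner ℝ x ξ' : ℝ))‖ ≤ 1 * 1 := by
          apply mul_le_mul (norm_gcut_le_one R x) _ (norm_nonneg _) one_pos.le
          rw [Real.norm_eq_abs]; exact Real.abs_cos_le_one _
      _ = 1 := one_mul 1
  have hbd2 : ∀ x, ‖f₂ x‖ ≤ 1 := by
    intro x
    rw [show f₂ x = gcut R x * Real.sin (2 * Real.pi * (inner ℝ x ξ' : ℝ)) from rfl, norm_mul]
    calc ‖gcut R x‖ * ‖Real.sin (2 * Real.pi * (inner ℝ x ξ' : ℝ))‖ ≤ 1 * 1 := by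
          apply mul_le_mul (norm_gcut_le_one R x) _ (norm_nonneg _) one_pos.le
          rw [Real.norm_eq_abs]; exact Real.abs_sin_le_one _
      _ = 1 := one_mul 1
  have hsplit : ∀ (ν : Measure (EuclideanSpace ℝ (Fin s))), IsProbabilityMeasure ν →
      ∫ x, ((gcut R x : ℝ) : ℂ) * eFun ξ' x ∂ν
        = ((∫ x, f₁ x ∂ν : ℝ) : ℂ) + ((∫ x, f₂ x ∂ν : ℝ) : ℂ) * Complex.I := by
    intro ν hν
    haveI := hν
    have hpt : ∀ x, ((gcut R x : ℝ) : ℂ) * eFun ξ' x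
        = ((f₁ x : ℝ) : ℂ) + ((f₂ x : ℝ) : ℂ) * Complex.I := by
      intro x
      rw [eFun_eq, Complex.exp_mul_I, ← Complex.ofReal_cos, ← Complex.ofReal_sin,
        show f₁ x = gcut R x * Real.cos (2 * Real.pi * (inner ℝ x ξ' : ℝ)) from rfl,
        show f₂ x = gcut R x * Real.sin (2 * Real.pi * (inner ℝ x ξ' : ℝ)) from rfl]
      push_cast
      ring
    have hint1 : Integrable (fun x => ((f₁ x : ℝ) : ℂ)) ν :=
      (integrable_bdd f₁.continuous 1 hbd1).ofReal
    have hint2 : Integrable (fun x => ((f₂ x : ℝ) : ℂ) * Complex.I) ν :=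
      ((integrable_bdd f₂.continuous 1 hbd2).ofReal).mul_const Complex.I
    calc ∫ x, ((gcut R x : ℝ) : ℂ) * eFun ξ' x ∂ν
        = ∫ x, (((f₁ x : ℝ) : ℂ) + ((f₂ x : ℝ) : ℂ) * Complex.I) ∂ν :=
          integral_congr_ae (ae_of_all _ hpt)
      _ = (∫ x, ((f₁ x : ℝ) : ℂ) ∂ν) + ∫ x, ((f₂ x : ℝ) : ℂ) * Complex.I ∂ν :=
          integral_add hint1 hint2
      _ = ((∫ x, f₁ x ∂ν : ℝ) : ℂ) + ((∫ x, f₂ x ∂ν : ℝ) : ℂ) * Complex.I := by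
          rw [integral_mul_const, integral_ofReal' _ (integrable_bdd f₁.continuous 1 hbd1),
            integral_ofReal' _ (integrable_bdd f₂.continuous 1 hbd2)]
  have hlim : ftE μ ξ' = ((∫ x, f₁ x ∂μ : ℝ) : ℂ) + ((∫ x, f₂ x ∂μ : ℝ) : ℂ) * Complex.I := by
    rw [ftE_eq, ← hsplit μ inferInstance]
    apply integral_congr_ae
    filter_upwards [hμae] with x hx
    rw [gcut_eq_one R x hx]
    push_cast
    rw [one_mul]
  have htend : Tendsto (fun n => ((∫ x, f₁ x ∂(μn n) : ℝ) : ℂ)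
      + ((∫ x, f₂ x ∂(μn n) : ℝ) : ℂ) * Complex.I) atTop
      (nhds (((∫ x, f₁ x ∂μ : ℝ) : ℂ) + ((∫ x, f₂ x ∂μ : ℝ) : ℂ) * Complex.I)) := by
    exact ((Complex.continuous_ofReal.tendsto _).comp (hw f₁ hcs1)).add
      (((Complex.continuous_ofReal.tendsto _).comp (hw f₂ hcs2)).mul_const Complex.I)
  rw [hlim]
  apply htend.congr
  intro n
  haveI := hn n
  exact (hsplit (μn n) (hn n)).symm
end Stmt6Aux
end

/-- Lemma 3.7.  If compactly supported Borel probability measures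
`μ_n → μ` weakly on `ℝ^s` and the integral periodic zero set `Z(μ)` is empty, then some
subsequence `{μ_{n_k}}` is an equi-positive family. -/
theorem statement6
    (s : ℕ) (μn : ℕ → Measure (EuclideanSpace ℝ (Fin s)))
    (μ : Measure (EuclideanSpace ℝ (Fin s)))
    [IsProbabilityMeasure μ] (hn : ∀ n, IsProbabilityMeasure (μn n))
    (hμc : ∃ K : Set (EuclideanSpace ℝ (Fin s)), IsCompact K ∧ μ Kᶜ = 0)
    (hμnc : ∀ n, ∃ K : Set (EuclideanSpace ℝ (Fin s)), IsCompact K ∧ μn n Kᶜ = 0)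
    (hw : WeakConvE μn μ) (hZ : ZE μ = ∅) :
    ∃ nk : ℕ → ℕ, StrictMono nk ∧ ∃ ε > 0,
      ∀ x ∈ cubeIco s, ∀ k : ℕ, ∃ m : Fin s → ℤ,
        ε < ‖ftE (μn (nk k)) (x + intVec m)‖ := by
  classical
  obtain ⟨K, hK, hKμ⟩ := hμc
  obtain ⟨r, hr⟩ := hK.isBounded.subset_closedBall 0
  set R : ℝ := |r| + 1 with hR
  have hRpos : 0 < R := by positivity
  have hKR : K ⊆ Metric.closedBall 0 R := by
    refine hr.trans (Metric.closedBall_subset_closedBall ?_)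
    have := le_abs_self r
    linarith
  have hμae : ∀ᵐ x ∂μ, ‖x‖ ≤ R := by
    have h1 : ∀ᵐ x ∂μ, x ∈ K := MeasureTheory.mem_ae_iff.mpr hKμ
    filter_upwards [h1] with x hx
    have h2 := hKR hx
    rw [Metric.mem_closedBall, dist_zero_right] at h2
    exact h2
  set L : ℝ := 2 * Real.pi * (R + 1) with hL
  have hLpos : 0 < L := by rw [hL]; positivity
  obtain ⟨ε₁, hε₁, T, hT⟩ := Stmt6Aux.exists_eps_cover μ hZ
  set δ : ℝ := ε₁ / (6 * (L + 1)) with hδ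
  have hδpos : 0 < δ := by rw [hδ]; positivity
  have hLδ : L * δ ≤ ε₁ / 6 := by
    have heq : L * δ = ε₁ * (L / (6 * (L + 1))) := by rw [hδ]; ring
    rw [heq]
    have h2 : L / (6 * (L + 1)) ≤ 1 / 6 := by
      rw [div_le_div_iff₀ (by positivity) (by norm_num)]
      linarith
    calc ε₁ * (L / (6 * (L + 1))) ≤ ε₁ * (1 / 6) :=
          mul_le_mul_of_nonneg_left h2 hε₁.le
      _ = ε₁ / 6 := by ring
  obtain ⟨F, hF⟩ := Stmt6Aux.isCompact_cubeIcc.elim_finite_subcover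
      (fun p : EuclideanSpace ℝ (Fin s) => Metric.ball p δ) (fun p => Metric.isOpen_ball)
      (fun ξ _ => Set.mem_iUnion.mpr ⟨ξ, Metric.mem_ball_self hδpos⟩)
  have htail := Stmt6Aux.tail_tendsto μn μ hn hw R hμae
  have hev1 : ∀ᶠ n in atTop, ∫ x, (1 - Stmt6Aux.gcut R x) ∂(μn n) < ε₁ / 6 :=
    htail.eventually_lt_const (by positivity)
  have hev2 : ∀ᶠ n in atTop, ∀ p ∈ F, ∀ m ∈ T,
      ‖Stmt6Aux.phi R (μn n) m p - ftE μ (p + intVec m)‖ < ε₁ / 6 := by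
    rw [eventually_all_finset]
    intro p hp
    rw [eventually_all_finset]
    intro m hm
    have h3 := Stmt6Aux.phi_tendsto μn μ hn hw R hμae m p
    obtain ⟨N, hN⟩ := Metric.tendsto_atTop.mp h3 (ε₁ / 6) (by positivity)
    refine eventually_atTop.mpr ⟨N, fun n hn' => ?_⟩
    rw [← dist_eq_norm]
    exact hN n hn'
  obtain ⟨N, hNall⟩ := eventually_atTop.mp (hev1.and hev2)
  refine ⟨fun k => N + k, fun a b hab => by show N + a < N + b; omega, ε₁ / 3, by positivity, ?_⟩
  intro ξ hξ k
  have hξIcc : ξ ∈ cubeIcc s := fun i => ⟨(hξ i).1, (hξ i).2.le⟩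
  obtain ⟨m, hmT, hm⟩ := hT ξ hξIcc
  obtain ⟨p, hpF, hpb⟩ := Set.mem_iUnion₂.mp (hF hξIcc)
  have hdist : ‖ξ - p‖ < δ := by rw [← dist_eq_norm]; exact Metric.mem_ball.mp hpb
  refine ⟨m, ?_⟩
  set n := N + k with hn'
  haveI := hn n
  obtain ⟨htail_n, hnet_n⟩ := hNall n (by omega)
  have h2 := hnet_n p hpF m hmT
  set a := ftE (μn n) (ξ + intVec m) with ha
  set b := Stmt6Aux.phi R (μn n) m ξ with hb
  set c := Stmt6Aux.phi R (μn n) m p with hc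
  set d := ftE μ (p + intVec m) with hd
  set e := ftE μ (ξ + intVec m) with he
  have h_ab : ‖a - b‖ ≤ ∫ x, (1 - Stmt6Aux.gcut R x) ∂(μn n) :=
    Stmt6Aux.phi_dist R (μn n) m ξ
  have h_bc : ‖b - c‖ ≤ L * ‖ξ - p‖ := Stmt6Aux.phi_lip R hRpos.le (μn n) m ξ p
  have h_ed : ‖e - d‖ ≤ L * ‖ξ - p‖ := Stmt6Aux.ftE_lip μ R hμae m ξ p
  have h_dc : ‖d - c‖ < ε₁ / 6 := by rw [norm_sub_rev]; exact h2
  have hLξp : L * ‖ξ - p‖ ≤ ε₁ / 6 :=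
    le_trans (mul_le_mul_of_nonneg_left hdist.le hLpos.le) hLδ
  have htri : ‖e - a‖ ≤ ‖e - d‖ + ‖d - c‖ + ‖c - b‖ + ‖b - a‖ := by
    have heq : e - a = (e - d) + (d - c) + (c - b) + (b - a) := by ring
    rw [heq]
    calc ‖(e - d) + (d - c) + (c - b) + (b - a)‖
        ≤ ‖(e - d) + (d - c) + (c - b)‖ + ‖b - a‖ := norm_add_le _ _
      _ ≤ ‖(e - d) + (d - c)‖ + ‖c - b‖ + ‖b - a‖ := by
          linarith [norm_add_le ((e - d) + (d - c)) (c - b)]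
      _ ≤ ‖e - d‖ + ‖d - c‖ + ‖c - b‖ + ‖b - a‖ := by
          linarith [norm_add_le (e - d) (d - c)]
  have hnorm : ‖e‖ - ‖a‖ ≤ ‖e - a‖ := norm_sub_norm_le e a
  have hcb : ‖c - b‖ = ‖b - c‖ := norm_sub_rev c b
  have hba : ‖b - a‖ = ‖a - b‖ := norm_sub_rev b a
  linarith [hm]
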